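/- The element C̃_𝔥 := −(1/16) Σ_{j,k,l,p} Q_𝔥([Z_j,Z_k]_𝔥, [Z_l,Z_p]_𝔥) Z_j·Z_k·Z_l·Z_p of Cl(𝔪) has only terms of degree zero and four, namely C̃_𝔥 = (1/8) Σ_{i,j} Q_𝔥([Z_i,Z_j]_𝔥,[Z_i,Z_j]_𝔥)·1 − (1/2) Σ_{i<j<k<l} ⟨Z_i, Jac_𝔥(Z_j,Z_k,Z_l)⟩ Z_i·Z_j·Z_k·Z_l, for every n = dim 𝔪 ≥ 3. -/
import Mathlib


open scoped BigOperators

/-- The quadratic form `v ↦ −⟨v,v⟩` on the subspace `𝔪`, built from a bilinear form on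
the ambient space; the associated Clifford algebra satisfies
`v·w + w·v = −2⟨v,w⟩·1` for `v,w ∈ 𝔪`. -/
noncomputable def mQF {𝔤 : Type*} [AddCommGroup 𝔤] [Module ℝ 𝔤]
    (𝔪 : Submodule ℝ 𝔤) (B : LinearMap.BilinForm ℝ 𝔤) : QuadraticForm ℝ ↥𝔪 :=
  LinearMap.BilinMap.toQuadraticMap ((-B).compl₁₂ 𝔪.subtype 𝔪.subtype)

/-- `Jac_𝔥(X,Y,Z) = [X,[Y,Z]_𝔥] + [Y,[Z,X]_𝔥] + [Z,[X,Y]_𝔥]`. -/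
noncomputable def jacH {𝔤 : Type*} [LieRing 𝔤] [LieAlgebra ℝ 𝔤]
    (p𝔥 : 𝔤 →ₗ[ℝ] 𝔤) (x y z : 𝔤) : 𝔤 :=
  ⁅x, p𝔥 ⁅y, z⁆⁆ + ⁅y, p𝔥 ⁅z, x⁆⁆ + ⁅z, p𝔥 ⁅x, y⁆⁆

set_option linter.unusedSectionVars false
set_option linter.unusedVariables false
set_option maxHeartbeats 1000000


section Comb
variable {M : Type*} [AddCommMonoid M] {α : Type*} [Fintype α]

private lemma sum_cyc3' (G : α → α → α → M) :
    ∑ a, ∑ b, ∑ c, G a b c = ∑ a, ∑ b, ∑ c, G c a b := by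
  rw [Finset.sum_comm]
  exact Finset.sum_congr rfl fun x _ => Finset.sum_comm

private lemma sum_cyc3 (G : α → α → α → M) :
    ∑ a, ∑ b, ∑ c, G a b c = ∑ a, ∑ b, ∑ c, G b c a := by
  rw [sum_cyc3' G, sum_cyc3' (fun a b c => G c a b)]

private lemma sum_swap12 (G : α → α → α → M) :
    ∑ a, ∑ b, ∑ c, G a b c = ∑ a, ∑ b, ∑ c, G b a c := Finset.sum_comm

private lemma sum4_swap23 (H : α → α → α → α → M) :
    ∑ j, ∑ k, ∑ l, ∑ p, H j k l p = ∑ j, ∑ k, ∑ l, ∑ p, H j l k p :=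
  Finset.sum_congr rfl fun j _ => sum_swap12 (H j)

private lemma sum4_cyc (H : α → α → α → α → M) :
    ∑ j, ∑ k, ∑ l, ∑ p, H j k l p = ∑ j, ∑ k, ∑ l, ∑ p, H j p k l :=
  Finset.sum_congr rfl fun j _ => sum_cyc3' (H j)

private lemma sum4_cyc' (H : α → α → α → α → M) :
    ∑ j, ∑ k, ∑ l, ∑ p, H j k l p = ∑ j, ∑ k, ∑ l, ∑ p, H j l p k :=
  Finset.sum_congr rfl fun j _ => sum_cyc3 (H j)

private lemma sum4_add (F G : α → α → α → α → M) :
    ∑ j, ∑ k, ∑ l, ∑ p, (F j k l p + G j k l p)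
      = (∑ j, ∑ k, ∑ l, ∑ p, F j k l p) + ∑ j, ∑ k, ∑ l, ∑ p, G j k l p := by
  simp [Finset.sum_add_distrib]

private lemma sum4_congr {F G : α → α → α → α → M} (h : ∀ j k l p, F j k l p = G j k l p) :
    ∑ j, ∑ k, ∑ l, ∑ p, F j k l p = ∑ j, ∑ k, ∑ l, ∑ p, G j k l p :=
  Finset.sum_congr rfl fun j _ => Finset.sum_congr rfl fun k _ =>
    Finset.sum_congr rfl fun l _ => Finset.sum_congr rfl fun p _ => h j k l p

end Comb

section Sym2
variable {M : Type*} [AddCommGroup M] [Module ℝ M] {α : Type*} [Fintype α] [DecidableEq α]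

private theorem sym2_sum (r : α → α → Prop) [DecidableRel r]
    (htri : ∀ u v, r u v ∨ u = v ∨ r v u)
    (hirr : ∀ u, ¬ r u u)
    (hasym : ∀ u v, r u v → ¬ r v u)
    (X : α → α → M) (hsym : ∀ u v, X u v = X v u) (hdiag : ∀ u, X u u = 0) :
    ∑ u, ∑ v, X u v = ∑ u, ∑ v, (if r u v then (2:ℝ) • X u v else 0) := by
  have key : ∀ u v, X u v =
      (if r u v then X u v else 0) + ((if r v u then X u v else 0) +
        (if u = v then X u v else 0)) := by
    intro u v
    rcases htri u v with h | h | h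
    · have h2 : u ≠ v := fun hh => hirr u (hh ▸ h)
      simp [h, hasym u v h, h2]
    · subst h; simp [hirr u, hdiag u]
    · have h1 : ¬ r u v := hasym v u h
      have h2 : u ≠ v := fun hh => hirr u (hh ▸ h)
      simp [h, h1, h2]
  calc ∑ u, ∑ v, X u v
      = (∑ u, ∑ v, if r u v then X u v else 0)
        + ((∑ u, ∑ v, if r v u then X u v else 0)
          + (∑ u, ∑ v, if u = v then X u v else 0)) := by
        rw [← Finset.sum_add_distrib, ← Finset.sum_add_distrib]
        exact Finset.sum_congr rfl fun u _ => by
          rw [← Finset.sum_add_distrib, ← Finset.sum_add_distrib]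
          exact Finset.sum_congr rfl fun v _ => key u v
    _ = (∑ u, ∑ v, if r u v then X u v else 0)
        + ((∑ u, ∑ v, if r u v then X u v else 0) + 0) := by
        congr 1
        congr 1
        · rw [Finset.sum_comm]
          exact Finset.sum_congr rfl fun u _ => Finset.sum_congr rfl fun v _ => by
            by_cases h : r u v <;> simp [h, hsym v u]
        · rw [Finset.sum_eq_zero]
          intro u _
          rw [Finset.sum_ite_eq]
          simp [hdiag u]
    _ = ∑ u, ∑ v, (if r u v then (2:ℝ) • X u v else 0) := by
        rw [add_zero, ← Finset.sum_add_distrib]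
        exact Finset.sum_congr rfl fun u _ => by
          rw [← Finset.sum_add_distrib]
          exact Finset.sum_congr rfl fun v _ => by
            by_cases h : r u v <;> simp [h, two_smul]

end Sym2

section Main

variable {n : ℕ} {M : Type*} [AddCommGroup M] [Module ℝ M]

private def r2 {n : ℕ} (u v : Fin n × Fin n) : Prop :=
  u.1 < v.1 ∨ (u.1 = v.1 ∧ u.2 < v.2)

private instance {n : ℕ} : DecidableRel (r2 (n := n)) := fun u v => by
  unfold r2; infer_instance

private lemma htri2 {n : ℕ} (u v : Fin n × Fin n) : r2 u v ∨ u = v ∨ r2 v u := by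
  rcases lt_trichotomy u.1 v.1 with h | h | h
  · exact Or.inl (Or.inl h)
  · rcases lt_trichotomy u.2 v.2 with h2 | h2 | h2
    · exact Or.inl (Or.inr ⟨h, h2⟩)
    · exact Or.inr (Or.inl (Prod.ext h h2))
    · exact Or.inr (Or.inr (Or.inr ⟨h.symm, h2⟩))
  · exact Or.inr (Or.inr (Or.inl h))

private lemma hirr2 {n : ℕ} (u : Fin n × Fin n) : ¬ r2 u u := by
  rintro (h | ⟨-, h⟩) <;> exact lt_irrefl _ h

private lemma hasym2 {n : ℕ} (u v : Fin n × Fin n) : r2 u v → ¬ r2 v u := by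
  rintro (h | ⟨he, h⟩) (h' | ⟨he', h'⟩)
  · exact lt_irrefl _ (h.trans h')
  · exact lt_irrefl _ (lt_of_lt_of_eq h he')
  · exact lt_irrefl _ (lt_of_lt_of_eq h' he)
  · exact lt_irrefl _ (h.trans h')

private theorem sum4_sorted (f : Fin n → Fin n → Fin n → Fin n → M)
    (hs1 : ∀ j k l p, f k j l p = f j k l p)
    (hs2 : ∀ j k l p, f j l k p = f j k l p)
    (hs3 : ∀ j k l p, f j k p l = f j k l p)
    (h12 : ∀ j l p, f j j l p = 0)
    (h34 : ∀ j k l, f j k l l = 0)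
    (h13 : ∀ j k p, f j k j p = 0)
    (h23 : ∀ j k p, f j k k p = 0)
    (h24 : ∀ j k l, f j k l k = 0) :
    ∑ j, ∑ k, ∑ l, ∑ p, f j k l p
      = ∑ j, ∑ k, ∑ l, ∑ p,
          (if j < k ∧ k < l ∧ l < p then (24:ℝ) • f j k l p else 0) := by
  have fps : ∀ j k l p, f l p j k = f j k l p := fun j k l p => by
    rw [hs2 l j p k, hs1 j l p k, hs3 j l k p, hs2 j k l p]
  have htriF : ∀ u v : Fin n, u < v ∨ u = v ∨ v < u := fun u v => lt_trichotomy u v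
  have hirrF : ∀ u : Fin n, ¬ u < u := fun u => lt_irrefl u
  have hasymF : ∀ u v : Fin n, u < v → ¬ v < u := fun u v h h' => lt_irrefl _ (h.trans h')
  -- Step A+B : reduce to ordered pairs
  have stepAB : ∑ j, ∑ k, ∑ l, ∑ p, f j k l p
      = ∑ j, ∑ k, ∑ l, ∑ p,
          (if j < k then (if l < p then (4:ℝ) • f j k l p else 0) else 0) := by
    rw [sym2_sum (· < ·) htriF hirrF hasymF (fun j k => ∑ l, ∑ p, f j k l p)
      (fun u v => Finset.sum_congr rfl fun l _ => Finset.sum_congr rfl fun p _ => (hs1 u v l p).symm)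
      (fun u => Finset.sum_eq_zero fun l _ => Finset.sum_eq_zero fun p _ => h12 u l p)]
    refine Finset.sum_congr rfl fun j _ => Finset.sum_congr rfl fun k _ => ?_
    by_cases h : j < k
    · rw [if_pos h,
        sym2_sum (· < ·) htriF hirrF hasymF (fun l p => f j k l p)
          (fun u v => (hs3 j k u v).symm) (fun u => h34 j k u),
        Finset.smul_sum]
      refine Finset.sum_congr rfl fun l _ => ?_
      rw [Finset.smul_sum]
      refine Finset.sum_congr rfl fun p _ => ?_
      by_cases h2 : l < p <;> simp [h, h2, smul_smul] <;> norm_num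
    · rw [if_neg h]
      exact (Finset.sum_eq_zero fun l _ => Finset.sum_eq_zero fun p _ => if_neg h).symm
  -- Step C : merge the two ordered pairs
  set W : (Fin n × Fin n) → (Fin n × Fin n) → M :=
    fun u v => if u.1 < u.2 ∧ v.1 < v.2 then (4:ℝ) • f u.1 u.2 v.1 v.2 else 0 with hW
  have hWsym : ∀ u v, W u v = W v u := by
    intro u v
    by_cases h1 : u.1 < u.2 <;> by_cases h2 : v.1 < v.2
    · simp only [hW]
      rw [if_pos ⟨h1, h2⟩, if_pos ⟨h2, h1⟩, fps]
    · simp [hW, h1, h2]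
    · simp [hW, h1, h2]
    · simp [hW, h1, h2]
  have hWdiag : ∀ u, W u u = 0 := fun u => by simp [hW, h13]
  have pairflat : ∀ (Y : (Fin n × Fin n) → (Fin n × Fin n) → M),
      (∑ u : Fin n × Fin n, ∑ v : Fin n × Fin n, Y u v)
        = ∑ j, ∑ k, ∑ l, ∑ p, Y (j, k) (l, p) := by
    intro Y
    rw [Fintype.sum_prod_type]
    exact Finset.sum_congr rfl fun j _ => Finset.sum_congr rfl fun k _ => by
      rw [Fintype.sum_prod_type]
  have stepC : ∑ j, ∑ k, ∑ l, ∑ p,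
          (if j < k then (if l < p then (4:ℝ) • f j k l p else 0) else 0)
      = ∑ j, ∑ k, ∑ l, ∑ p,
          (if (j < k ∧ l < p) ∧ (j < l ∨ (j = l ∧ k < p)) then (8:ℝ) • f j k l p else 0) := by
    calc ∑ j, ∑ k, ∑ l, ∑ p,
            (if j < k then (if l < p then (4:ℝ) • f j k l p else 0) else 0)
        = ∑ j, ∑ k, ∑ l, ∑ p, W (j, k) (l, p) := by
          refine sum4_congr fun j k l p => ?_
          by_cases h1 : j < k <;> by_cases h2 : l < p <;> simp [hW, h1, h2]
      _ = ∑ u : Fin n × Fin n, ∑ v : Fin n × Fin n, W u v := (pairflat W).symm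
      _ = ∑ u : Fin n × Fin n, ∑ v : Fin n × Fin n, (if r2 u v then (2:ℝ) • W u v else 0) :=
          sym2_sum r2 htri2 hirr2 hasym2 W hWsym hWdiag
      _ = ∑ j, ∑ k, ∑ l, ∑ p, (if r2 (j, k) (l, p) then (2:ℝ) • W (j, k) (l, p) else 0) :=
          pairflat _
      _ = ∑ j, ∑ k, ∑ l, ∑ p,
            (if (j < k ∧ l < p) ∧ (j < l ∨ (j = l ∧ k < p)) then (8:ℝ) • f j k l p else 0) := by
          refine sum4_congr fun j k l p => ?_
          by_cases hr : j < l ∨ (j = l ∧ k < p) <;> by_cases hc : j < k ∧ l < p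
          · rw [if_pos (show r2 (j,k) (l,p) from hr), if_pos ⟨hc, hr⟩]
            simp only [hW]
            rw [if_pos hc, smul_smul]
            norm_num
          · rw [if_pos (show r2 (j,k) (l,p) from hr), if_neg (fun hh => hc hh.1)]
            simp only [hW]
            rw [if_neg hc, smul_zero]
          · rw [if_neg (show ¬ r2 (j,k) (l,p) from hr), if_neg (fun hh => hr hh.2)]
          · rw [if_neg (show ¬ r2 (j,k) (l,p) from hr), if_neg (fun hh => hr hh.2)]
  -- Step D : split into the three interleavings and sort each
  have hsplit : ∀ j k l p : Fin n,
      (if (j < k ∧ l < p) ∧ (j < l ∨ (j = l ∧ k < p)) then (8:ℝ) • f j k l p else 0)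
      = (if j < k ∧ k < l ∧ l < p then (8:ℝ) • f j k l p else 0)
        + ((if j < l ∧ l < k ∧ k < p then (8:ℝ) • f j k l p else 0)
          + (if j < l ∧ l < p ∧ p < k then (8:ℝ) • f j k l p else 0)) := by
    intro j k l p
    by_cases hm : (j < k ∧ l < p) ∧ (j < l ∨ (j = l ∧ k < p))
    · rw [if_pos hm]
      obtain ⟨⟨hjk, hlp⟩, hor⟩ := hm
      rcases hor with hjl | ⟨hje, hkp⟩
      · rcases lt_trichotomy k l with hkl | hkl | hkl
        · rw [if_pos ⟨hjk, hkl, hlp⟩,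
            if_neg (fun h : j < l ∧ l < k ∧ k < p => lt_irrefl k (hkl.trans h.2.1)),
            if_neg (fun h : j < l ∧ l < p ∧ p < k => lt_irrefl k ((hkl.trans hlp).trans h.2.2))]
          simp
        · subst hkl
          rw [if_neg (fun h : j < k ∧ k < k ∧ k < p => lt_irrefl k h.2.1),
            if_neg (fun h : j < k ∧ k < p ∧ p < k => lt_irrefl k (h.2.1.trans h.2.2))]
          simp [h23]
        · rcases lt_trichotomy k p with hkp | hkp | hkp
          · rw [if_neg (fun h : j < k ∧ k < l ∧ l < p => lt_irrefl k (h.2.1.trans hkl)),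
              if_pos ⟨hjl, hkl, hkp⟩,
              if_neg (fun h : j < l ∧ l < p ∧ p < k => lt_irrefl k (hkp.trans h.2.2))]
            simp
          · subst hkp
            rw [if_neg (fun h : j < k ∧ k < l ∧ l < k => lt_irrefl k (h.2.1.trans h.2.2)),
              if_neg (fun h : j < l ∧ l < k ∧ k < k => lt_irrefl k h.2.2)]
            simp [h24]
          · rw [if_neg (fun h : j < k ∧ k < l ∧ l < p => lt_irrefl k (h.2.1.trans hkl)),
              if_neg (fun h : j < l ∧ l < k ∧ k < p => lt_irrefl p (hkp.trans h.2.2)),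
              if_pos ⟨hjl, hlp, hkp⟩]
            simp
      · subst hje
        rw [if_neg (fun h : j < k ∧ k < j ∧ j < p => lt_irrefl j (h.1.trans h.2.1)),
          if_neg (fun h : j < j ∧ j < k ∧ k < p => lt_irrefl j h.1),
          if_neg (fun h : j < j ∧ j < p ∧ p < k => lt_irrefl j h.1)]
        simp [h13]
    · rw [if_neg hm,
        if_neg (fun h : j < k ∧ k < l ∧ l < p =>
          hm ⟨⟨h.1, h.2.2⟩, Or.inl (h.1.trans h.2.1)⟩),
        if_neg (fun h : j < l ∧ l < k ∧ k < p =>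
          hm ⟨⟨h.1.trans h.2.1, h.2.1.trans h.2.2⟩, Or.inl h.1⟩),
        if_neg (fun h : j < l ∧ l < p ∧ p < k =>
          hm ⟨⟨h.1.trans (h.2.1.trans h.2.2), h.2.1⟩, Or.inl h.1⟩)]
      simp
  have hC2 : (∑ j, ∑ k, ∑ l, ∑ p, if j < l ∧ l < k ∧ k < p then (8:ℝ) • f j k l p else 0)
      = ∑ j, ∑ k, ∑ l, ∑ p, (if j < k ∧ k < l ∧ l < p then (8:ℝ) • f j k l p else 0) := by
    rw [sum4_swap23 (fun j k l p => if j < l ∧ l < k ∧ k < p then (8:ℝ) • f j k l p else 0)]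
    refine sum4_congr fun j k l p => ?_
    by_cases h : j < k ∧ k < l ∧ l < p
    · rw [if_pos h, if_pos h, hs2 j k l p]
    · rw [if_neg h, if_neg h]
  have hC3 : (∑ j, ∑ k, ∑ l, ∑ p, if j < l ∧ l < p ∧ p < k then (8:ℝ) • f j k l p else 0)
      = ∑ j, ∑ k, ∑ l, ∑ p, (if j < k ∧ k < l ∧ l < p then (8:ℝ) • f j k l p else 0) := by
    rw [sum4_cyc (fun j k l p => if j < l ∧ l < p ∧ p < k then (8:ℝ) • f j k l p else 0)]
    refine sum4_congr fun j k l p => ?_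
    by_cases h : j < k ∧ k < l ∧ l < p
    · rw [if_pos h, if_pos h, hs2 j k p l, hs3 j k l p]
    · rw [if_neg h, if_neg h]
  rw [stepAB, stepC, sum4_congr hsplit, sum4_add, sum4_add, hC2, hC3]
  rw [← sum4_add, ← sum4_add]
  refine sum4_congr fun j k l p => ?_
  by_cases h : j < k ∧ k < l ∧ l < p
  · simp only [if_pos h]
    rw [← add_smul, ← add_smul]
    norm_num
  · simp only [if_neg h]
    simp

end Main


section CoreSection
variable {n : ℕ} {A : Type*} [Ring A] [Algebra ℝ A]





private lemma deg2_sum (e : Fin n → A)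
    (hrel : ∀ i j, e i * e j = -(e j * e i) - ((2:ℝ) * (if i = j then 1 else 0)) • (1:A))
    (b : Fin n → Fin n → ℝ) (hb : ∀ i j, b i j = b j i) :
    ∑ i, ∑ j, b i j • (e i * e j) = (-∑ i, b i i) • (1:A) := by
  set L := ∑ i, ∑ j, b i j • (e i * e j) with hL
  have swap : ∑ i, ∑ j, b i j • (e j * e i) = L := by
    rw [hL, Finset.sum_comm]
    exact Finset.sum_congr rfl fun i _ => Finset.sum_congr rfl fun j _ => by
      rw [hb j i]
  have hneg : ∑ i, ∑ j, -(b i j • (e j * e i)) = -L := by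
    rw [← swap]
    simp
  have hdiagsum : ∑ i, ∑ j, (b i j * ((2:ℝ) * (if i = j then 1 else 0))) • (1:A)
      = ((2:ℝ) * ∑ i, b i i) • (1:A) := by
    have hpt : ∀ i : Fin n, ∑ j, (b i j * ((2:ℝ) * (if i = j then 1 else 0))) • (1:A)
        = ((2:ℝ) * b i i) • (1:A) := by
      intro i
      have : ∀ j, (b i j * ((2:ℝ) * (if i = j then 1 else 0))) • (1:A)
          = if i = j then ((2:ℝ) * b i j) • (1:A) else 0 := by
        intro j
        by_cases h : i = j <;> simp [h, mul_comm]
      rw [Finset.sum_congr rfl fun j _ => this j, Finset.sum_ite_eq]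
      simp
    rw [Finset.sum_congr rfl fun i _ => hpt i, ← Finset.sum_smul, ← Finset.mul_sum]
  have expand : L = -L - ((2:ℝ) * ∑ i, b i i) • (1:A) := by
    calc L = ∑ i, ∑ j, b i j • (-(e j * e i) - ((2:ℝ) * (if i = j then 1 else 0)) • (1:A)) :=
        Finset.sum_congr rfl fun i _ => Finset.sum_congr rfl fun j _ => by rw [← hrel]
      _ = (∑ i, ∑ j, -(b i j • (e j * e i)))
            - ∑ i, ∑ j, (b i j * ((2:ℝ) * (if i = j then 1 else 0))) • (1:A) := by
        rw [← Finset.sum_sub_distrib]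
        refine Finset.sum_congr rfl fun i _ => ?_
        rw [← Finset.sum_sub_distrib]
        refine Finset.sum_congr rfl fun j _ => ?_
        rw [smul_sub, smul_neg, smul_smul]
      _ = -L - ((2:ℝ) * ∑ i, b i i) • (1:A) := by rw [hneg, hdiagsum]
  have h2 : (2:ℝ) • L = (((-2):ℝ) * ∑ i, b i i) • (1:A) := by
    rw [two_smul]
    nth_rewrite 2 [expand]
    rw [neg_mul, neg_smul]
    abel
  calc L = ((1:ℝ)/2) • ((2:ℝ) • L) := by rw [smul_smul]; norm_num
    _ = (-∑ i, b i i) • (1:A) := by rw [h2, smul_smul]; congr 1; ring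


private theorem casimir_core (e : Fin n → A)
    (hrel : ∀ i j, e i * e j = -(e j * e i) - ((2:ℝ) * (if i = j then 1 else 0)) • (1:A))
    (a : Fin n → Fin n → Fin n → Fin n → ℝ)
    (h1 : ∀ j k l p, a j k l p = -a k j l p)
    (h2 : ∀ j k l p, a j k l p = -a j k p l)
    (h3 : ∀ j k l p, a j k l p = a l p j k) :
    (-(1 / 16) : ℝ) • ∑ j, ∑ k, ∑ l, ∑ p, a j k l p • (e j * e k * e l * e p)
      = ((1 / 8 : ℝ) * ∑ i, ∑ j, a i j i j) • (1:A)
        - (1 / 2 : ℝ) • ∑ j, ∑ k, ∑ l, ∑ p,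
            (if j < k ∧ k < l ∧ l < p then
              (a j k l p + a j l p k + a j p k l) • (e j * e k * e l * e p) else 0) := by
  have hswap : ∀ {i j : Fin n}, i ≠ j → e i * e j = -(e j * e i) := by
    intro i j h
    simpa [h] using hrel i j
  have keyE1 : ∀ j k l p, e j * e k * e l * e p
      = e j * e p * e k * e l
        + (((2:ℝ) * (if k = p then 1 else 0)) • (e j * e l)
          - ((2:ℝ) * (if l = p then 1 else 0)) • (e j * e k)) := by
    intro j k l p
    rw [mul_assoc (e j * e k) (e l) (e p), hrel l p]
    simp only [mul_sub, mul_neg, mul_smul_comm, mul_one, mul_assoc]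
    rw [← mul_assoc (e k) (e p) (e l), hrel k p]
    simp only [sub_mul, neg_mul, smul_mul_assoc, mul_sub, mul_neg, mul_smul_comm, mul_one,
      one_mul, mul_assoc]
    abel
  have keyE2 : ∀ j k l p, e j * e k * e l * e p
      = e j * e l * e p * e k
        + (((2:ℝ) * (if k = p then 1 else 0)) • (e j * e l)
          - ((2:ℝ) * (if k = l then 1 else 0)) • (e j * e p)) := by
    intro j k l p
    rw [mul_assoc (e j) (e k) (e l), hrel k l]
    simp only [mul_sub, mul_neg, mul_smul_comm, mul_one, sub_mul, neg_mul, smul_mul_assoc,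
      mul_assoc]
    rw [hrel k p]
    simp only [sub_mul, neg_mul, smul_mul_assoc, mul_sub, mul_neg, mul_smul_comm, mul_one,
      one_mul, mul_assoc]
    abel
  have ha12 : ∀ j l p, a j j l p = 0 := fun j l p => by have := h1 j j l p; linarith
  have ha34 : ∀ j k l, a j k l l = 0 := fun j k l => by have := h2 j k l l; linarith
  set c : ℝ := ∑ i, ∑ j, a i j i j with hc
  set S : A := ∑ j, ∑ k, ∑ l, ∑ p, a j k l p • (e j * e k * e l * e p) with hS
  set D : A := ∑ j, ∑ k, ∑ l, ∑ p,
      (if j < k ∧ k < l ∧ l < p then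
        (a j k l p + a j l p k + a j p k l) • (e j * e k * e l * e p) else 0) with hD
  set S₁ : A := ∑ j, ∑ k, ∑ l, ∑ p, a j k l p • (e j * e p * e k * e l) with hS₁
  set S₂ : A := ∑ j, ∑ k, ∑ l, ∑ p, a j k l p • (e j * e l * e p * e k) with hS₂
  -- T and U sums
  have Tsum : ∑ j, ∑ k, ∑ l, ((2:ℝ) * a j k l k) • (e j * e l)
      = (-((2:ℝ) * c)) • (1:A) := by
    have reorder : ∑ j, ∑ k, ∑ l, ((2:ℝ) * a j k l k) • (e j * e l)
        = ∑ j, ∑ l, (∑ k, (2:ℝ) * a j k l k) • (e j * e l) := by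
      refine Finset.sum_congr rfl fun j _ => ?_
      rw [Finset.sum_comm]
      exact Finset.sum_congr rfl fun l _ => (Finset.sum_smul).symm
    rw [reorder, deg2_sum e hrel (fun j l => ∑ k, (2:ℝ) * a j k l k)
      (fun i j => Finset.sum_congr rfl fun k _ => by rw [h3 i k j k])]
    congr 1
    rw [hc, Finset.mul_sum, neg_inj]
    exact Finset.sum_congr rfl fun i _ => by rw [Finset.mul_sum]
  have Usum : ∑ j, ∑ k, ∑ p, ((2:ℝ) * a j k k p) • (e j * e p)
      = ((2:ℝ) * c) • (1:A) := by
    have reorder : ∑ j, ∑ k, ∑ p, ((2:ℝ) * a j k k p) • (e j * e p)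
        = ∑ j, ∑ p, (∑ k, (2:ℝ) * a j k k p) • (e j * e p) := by
      refine Finset.sum_congr rfl fun j _ => ?_
      rw [Finset.sum_comm]
      exact Finset.sum_congr rfl fun p _ => (Finset.sum_smul).symm
    rw [reorder, deg2_sum e hrel (fun j p => ∑ k, (2:ℝ) * a j k k p)
      (fun i j => Finset.sum_congr rfl fun k _ => by
        have e1 := h3 j k k i
        have e2 := h1 i k j k
        have e3 := h2 i k k j
        have : a i k k j = a j k k i := by linarith
        rw [this])]
    have flip : ∑ j : Fin n, ∑ k, (2:ℝ) * a j k k j = -∑ j : Fin n, ∑ k, (2:ℝ) * a j k j k := by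
      rw [← Finset.sum_neg_distrib]
      refine Finset.sum_congr rfl fun j _ => ?_
      rw [← Finset.sum_neg_distrib]
      refine Finset.sum_congr rfl fun k _ => ?_
      have := h2 j k k j
      linarith
    rw [flip, neg_neg]
    congr 1
    rw [hc, Finset.mul_sum]
    exact Finset.sum_congr rfl fun i _ => by rw [Finset.mul_sum]
  -- pointwise expansions with scalar-collapsed deltas
  have pt1 : ∀ j k l p, a j k l p • (e j * e k * e l * e p)
      = a j k l p • (e j * e p * e k * e l)
        + ((if k = p then ((2:ℝ) * a j k l p) • (e j * e l) else 0)
          - (if l = p then ((2:ℝ) * a j k l p) • (e j * e k) else 0)) := by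
    intro j k l p
    rw [keyE1 j k l p, smul_add, smul_sub, smul_smul, smul_smul]
    by_cases hkp : k = p <;> by_cases hlp : l = p <;>
      simp [hkp, hlp, mul_comm]
  have pt2 : ∀ j k l p, a j k l p • (e j * e k * e l * e p)
      = a j k l p • (e j * e l * e p * e k)
        + ((if k = p then ((2:ℝ) * a j k l p) • (e j * e l) else 0)
          - (if k = l then ((2:ℝ) * a j k l p) • (e j * e p) else 0)) := by
    intro j k l p
    rw [keyE2 j k l p, smul_add, smul_sub, smul_smul, smul_smul]
    by_cases hkp : k = p <;> by_cases hkl : k = l <;>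
      simp [hkp, hkl, mul_comm]
  -- claim 1 : S = S₁ - (2c)•1
  have claim1 : S = S₁ + (-((2:ℝ) * c)) • (1:A) := by
    rw [hS, hS₁]
    calc ∑ j, ∑ k, ∑ l, ∑ p, a j k l p • (e j * e k * e l * e p)
        = ∑ j, ∑ k, ∑ l, ((∑ p, a j k l p • (e j * e p * e k * e l))
            + ((2:ℝ) * a j k l k) • (e j * e l)) := by
          refine Finset.sum_congr rfl fun j _ => Finset.sum_congr rfl fun k _ =>
            Finset.sum_congr rfl fun l _ => ?_
          rw [Finset.sum_congr rfl fun p _ => pt1 j k l p, Finset.sum_add_distrib,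
            Finset.sum_sub_distrib, Finset.sum_ite_eq, Finset.sum_ite_eq]
          simp [ha34 j k l]
      _ = (∑ j, ∑ k, ∑ l, ∑ p, a j k l p • (e j * e p * e k * e l))
            + ∑ j, ∑ k, ∑ l, ((2:ℝ) * a j k l k) • (e j * e l) := by
          simp [Finset.sum_add_distrib]
      _ = _ := by rw [Tsum]
  -- claim 2 : S = S₂ - (2c)•1 - (2c)•1
  have claim2 : S = S₂ + ((-((2:ℝ) * c)) • (1:A) - ((2:ℝ) * c) • (1:A)) := by
    rw [hS, hS₂]
    calc ∑ j, ∑ k, ∑ l, ∑ p, a j k l p • (e j * e k * e l * e p)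
        = ∑ j, ∑ k, ((∑ l, ∑ p, a j k l p • (e j * e l * e p * e k))
            + ((∑ l, ((2:ℝ) * a j k l k) • (e j * e l))
              - (∑ p, ((2:ℝ) * a j k k p) • (e j * e p)))) := by
          refine Finset.sum_congr rfl fun j _ => Finset.sum_congr rfl fun k _ => ?_
          calc ∑ l, ∑ p, a j k l p • (e j * e k * e l * e p)
              = ∑ l, ∑ p, (a j k l p • (e j * e l * e p * e k)
                  + ((if k = p then ((2:ℝ) * a j k l p) • (e j * e l) else 0)
                    - (if k = l then ((2:ℝ) * a j k l p) • (e j * e p) else 0))) := by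
                exact Finset.sum_congr rfl fun l _ => Finset.sum_congr rfl fun p _ => pt2 j k l p
            _ = (∑ l, ∑ p, a j k l p • (e j * e l * e p * e k))
                  + ((∑ l, ∑ p, if k = p then ((2:ℝ) * a j k l p) • (e j * e l) else 0)
                    - (∑ l, ∑ p, if k = l then ((2:ℝ) * a j k l p) • (e j * e p) else 0)) := by
                simp [Finset.sum_add_distrib, Finset.sum_sub_distrib]
            _ = _ := by
                congr 1
                congr 1
                · exact Finset.sum_congr rfl fun l _ => by rw [Finset.sum_ite_eq]; simp
                · rw [Finset.sum_comm]
                  exact Finset.sum_congr rfl fun p _ => by rw [Finset.sum_ite_eq]; simp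
      _ = (∑ j, ∑ k, ∑ l, ∑ p, a j k l p • (e j * e l * e p * e k))
            + ((∑ j, ∑ k, ∑ l, ((2:ℝ) * a j k l k) • (e j * e l))
              - (∑ j, ∑ k, ∑ p, ((2:ℝ) * a j k k p) • (e j * e p))) := by
          simp [Finset.sum_add_distrib, Finset.sum_sub_distrib]
      _ = _ := by rw [Tsum, Usum]
  have claim1' : S₁ = S + ((2:ℝ) * c) • (1:A) := by rw [claim1]; module
  have claim2' : S₂ = S + (((2:ℝ) * c) • (1:A) + ((2:ℝ) * c) • (1:A)) := by rw [claim2]; module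
  -- reindexing
  have hR1 : ∑ j, ∑ k, ∑ l, ∑ p, a j l p k • (e j * e k * e l * e p) = S₁ := by
    rw [sum4_cyc (fun j k l p => a j l p k • (e j * e k * e l * e p)), hS₁]
  have hR2 : ∑ j, ∑ k, ∑ l, ∑ p, a j p k l • (e j * e k * e l * e p) = S₂ := by
    rw [sum4_cyc' (fun j k l p => a j p k l • (e j * e k * e l * e p)), hS₂]
  -- symmetries of the Bianchi coefficient
  have gsw12 : ∀ j k l p, a k j l p + a k l p j + a k p j l
      = -(a j k l p + a j l p k + a j p k l) := by
    intro j k l p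
    have e1 := h1 j k l p
    have e2 := h3 k l p j
    have e3 := h1 j p k l
    have e4 := h3 k p j l
    have e5 := h2 j l k p
    linarith
  have gsw23 : ∀ j k l p, a j l k p + a j k p l + a j p l k
      = -(a j k l p + a j l p k + a j p k l) := by
    intro j k l p
    have e1 := h2 j l k p
    have e2 := h2 j k l p
    have e3 := h2 j p k l
    linarith
  have gsw34 : ∀ j k l p, a j k p l + a j p l k + a j l k p
      = -(a j k l p + a j l p k + a j p k l) := by
    intro j k l p
    have e1 := h2 j k l p
    have e2 := h2 j p k l
    have e3 := h2 j l k p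
    linarith
  -- vanishing of the Bianchi coefficient on coincidences
  have g12 : ∀ j l p, a j j l p + a j l p j + a j p j l = 0 := by
    intro j l p
    have := gsw12 j j l p
    linarith
  have g23 : ∀ j k p, a j k k p + a j k p k + a j p k k = 0 := by
    intro j k p
    have := gsw23 j k k p
    linarith
  have g13 : ∀ j k p, a j k j p + a j j p k + a j p k j = 0 := by
    intro j k p
    have h' := gsw23 j j k p
    have h'' := g12 j k p
    linarith
  have g24 : ∀ j k l, a j k l k + a j l k k + a j k k l = 0 := by
    intro j k l
    have h' := gsw34 j k k l
    have h'' := g23 j k l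
    linarith
  -- the function for the sorted-sum lemma
  set f : Fin n → Fin n → Fin n → Fin n → A := fun j k l p =>
    (a j k l p + a j l p k + a j p k l) • (e j * e k * e l * e p) with hf
  have hfs1 : ∀ j k l p, f k j l p = f j k l p := by
    intro j k l p
    by_cases h : k = j
    · subst h; rfl
    · simp only [hf]
      rw [hswap h, neg_mul, neg_mul, gsw12 j k l p, neg_smul, smul_neg, neg_neg]
  have hfs2 : ∀ j k l p, f j l k p = f j k l p := by
    intro j k l p
    by_cases h : l = k
    · subst h; rfl
    · simp only [hf]
      rw [mul_assoc (e j) (e l) (e k), hswap h, mul_neg, ← mul_assoc, neg_mul,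
        gsw23 j k l p, neg_smul, smul_neg, neg_neg]
  have hfs3 : ∀ j k l p, f j k p l = f j k l p := by
    intro j k l p
    by_cases h : p = l
    · subst h; rfl
    · simp only [hf]
      rw [mul_assoc (e j * e k) (e p) (e l), hswap h, mul_neg, ← mul_assoc,
        gsw34 j k l p, neg_smul, smul_neg, neg_neg]
  have hf12 : ∀ j l p, f j j l p = 0 := fun j l p => by
    simp only [hf]; rw [g12 j l p, zero_smul]
  have hf34 : ∀ j k l, f j k l l = 0 := fun j k l => by
    simp only [hf]
    have := gsw34 j k l l
    rw [show a j k l l + a j l l k + a j l k l = 0 by linarith, zero_smul]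
  have hf13 : ∀ j k p, f j k j p = 0 := fun j k p => by
    simp only [hf]; rw [g13 j k p, zero_smul]
  have hf23 : ∀ j k p, f j k k p = 0 := fun j k p => by
    simp only [hf]
    have := g23 j k p
    rw [show a j k k p + a j k p k + a j p k k = 0 from this, zero_smul]
  have hf24 : ∀ j k l, f j k l k = 0 := fun j k l => by
    simp only [hf]; rw [g24 j k l, zero_smul]
  -- assemble : S + S₁ + S₂ = 24 • D
  have hG : S + (S₁ + S₂) = (24:ℝ) • D := by
    rw [← hR1, ← hR2, hS, ← sum4_add, ← sum4_add]
    calc ∑ j, ∑ k, ∑ l, ∑ p,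
          (a j k l p • (e j * e k * e l * e p)
            + (a j l p k • (e j * e k * e l * e p) + a j p k l • (e j * e k * e l * e p)))
        = ∑ j, ∑ k, ∑ l, ∑ p, f j k l p := by
          refine sum4_congr fun j k l p => ?_
          simp only [hf]
          rw [add_smul, add_smul, add_assoc]
      _ = ∑ j, ∑ k, ∑ l, ∑ p,
            (if j < k ∧ k < l ∧ l < p then (24:ℝ) • f j k l p else 0) :=
          sum4_sorted f hfs1 hfs2 hfs3 hf12 hf34 hf13 hf23 hf24
      _ = (24:ℝ) • D := by
          rw [hD, Finset.smul_sum]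
          refine Finset.sum_congr rfl fun j _ => ?_
          rw [Finset.smul_sum]
          refine Finset.sum_congr rfl fun k _ => ?_
          rw [Finset.smul_sum]
          refine Finset.sum_congr rfl fun l _ => ?_
          rw [Finset.smul_sum]
          refine Finset.sum_congr rfl fun p _ => ?_
          by_cases h : j < k ∧ k < l ∧ l < p <;> simp [h, hf]
  -- solve for S
  have hSval : S = (8:ℝ) • D - ((2:ℝ) * c) • (1:A) := by
    have key : S + ((S + ((2:ℝ) * c) • (1:A))
        + (S + (((2:ℝ) * c) • (1:A) + ((2:ℝ) * c) • (1:A)))) = (24:ℝ) • D := by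
      rw [← claim1', ← claim2']
      exact hG
    have h3 : (3:ℝ) • S = (3:ℝ) • ((8:ℝ) • D - ((2:ℝ) * c) • (1:A)) := by
      calc (3:ℝ) • S
          = (S + ((S + ((2:ℝ) * c) • (1:A))
              + (S + (((2:ℝ) * c) • (1:A) + ((2:ℝ) * c) • (1:A)))))
            - (((2:ℝ) * c) • (1:A) + (((2:ℝ) * c) • (1:A) + ((2:ℝ) * c) • (1:A))) := by
            module
        _ = (24:ℝ) • D
            - (((2:ℝ) * c) • (1:A) + (((2:ℝ) * c) • (1:A) + ((2:ℝ) * c) • (1:A))) := by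
            rw [key]
        _ = (3:ℝ) • ((8:ℝ) • D - ((2:ℝ) * c) • (1:A)) := by module
    calc S = (1/3:ℝ) • ((3:ℝ) • S) := by rw [smul_smul]; norm_num
      _ = (1/3:ℝ) • ((3:ℝ) • ((8:ℝ) • D - ((2:ℝ) * c) • (1:A))) := by rw [h3]
      _ = (8:ℝ) • D - ((2:ℝ) * c) • (1:A) := by rw [smul_smul]; norm_num
  rw [hSval]
  module


end CoreSection

/-- The lifted Casimir element
`C̃_𝔥 = −(1/16) Σ_{j,k,l,p} Q_𝔥([Z_j,Z_k]_𝔥,[Z_l,Z_p]_𝔥) Z_j·Z_k·Z_l·Z_p` of `Cl(𝔪)`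
has only terms of degree zero and four:
`C̃_𝔥 = (1/8) Σ_{i,j} Q_𝔥([Z_i,Z_j]_𝔥,[Z_i,Z_j]_𝔥)·1
      − (1/2) Σ_{i<j<k<l} ⟨Z_i, Jac_𝔥(Z_j,Z_k,Z_l)⟩ Z_i·Z_j·Z_k·Z_l`, for every `n ≥ 3`. -/
theorem stmt12
    {𝔤 : Type*} [LieRing 𝔤] [LieAlgebra ℝ 𝔤] [FiniteDimensional ℝ 𝔤]
    (𝔥 𝔪 : Submodule ℝ 𝔤)
    (p𝔥 p𝔪 : 𝔤 →ₗ[ℝ] 𝔤)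
    (hsum : ∀ x, p𝔥 x + p𝔪 x = x)
    (hmem𝔥 : ∀ x, p𝔥 x ∈ 𝔥) (hmem𝔪 : ∀ x, p𝔪 x ∈ 𝔪)
    (hid𝔥 : ∀ x ∈ 𝔥, p𝔥 x = x) (hid𝔪 : ∀ x ∈ 𝔪, p𝔪 x = x)
    (hsub : ∀ x ∈ 𝔥, ∀ y ∈ 𝔥, ⁅x, y⁆ ∈ 𝔥)
    (hhm : ∀ x ∈ 𝔥, ∀ y ∈ 𝔪, ⁅x, y⁆ ∈ 𝔪)
    (Q : LinearMap.BilinForm ℝ 𝔤)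
    (hQsymm : ∀ x y, Q x y = Q y x)
    (hQinv : ∀ w u v : 𝔤, Q ⁅w, u⁆ v + Q u ⁅w, v⁆ = 0)
    (hQ𝔥𝔪 : ∀ x ∈ 𝔥, ∀ y ∈ 𝔪, Q x y = 0)
    (hQpos𝔪 : ∀ x ∈ 𝔪, x ≠ 0 → 0 < Q x x)
    (hQ𝔥nd : ∀ x ∈ 𝔥, (∀ y ∈ 𝔥, Q x y = 0) → x = 0)
    {n : ℕ} (Z : Fin n → 𝔤) (hZ𝔪 : ∀ i, Z i ∈ 𝔪)
    (hZon : ∀ i j, Q (Z i) (Z j) = if i = j then 1 else 0)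
    (hZspan : Submodule.span ℝ (Set.range Z) = 𝔪)
    (hn : 3 ≤ n) :
    let ι := CliffordAlgebra.ι (mQF 𝔪 Q)
    (-(1 / 16) : ℝ) • ∑ j, ∑ k, ∑ l, ∑ p,
        Q (p𝔥 ⁅Z j, Z k⁆) (p𝔥 ⁅Z l, Z p⁆) •
          (ι ⟨Z j, hZ𝔪 j⟩ * ι ⟨Z k, hZ𝔪 k⟩ * ι ⟨Z l, hZ𝔪 l⟩ * ι ⟨Z p, hZ𝔪 p⟩) =
      ((1 / 8 : ℝ) * ∑ i, ∑ j, Q (p𝔥 ⁅Z i, Z j⁆) (p𝔥 ⁅Z i, Z j⁆)) •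
          (1 : CliffordAlgebra (mQF 𝔪 Q))
        - (1 / 2 : ℝ) • ∑ i, ∑ j, ∑ k, ∑ l,
            (if i < j ∧ j < k ∧ k < l then
              Q (Z i) (jacH p𝔥 (Z j) (Z k) (Z l)) •
                (ι ⟨Z i, hZ𝔪 i⟩ * ι ⟨Z j, hZ𝔪 j⟩ * ι ⟨Z k, hZ𝔪 k⟩ * ι ⟨Z l, hZ𝔪 l⟩)
             else 0) := by
  intro ι
  set e : Fin n → CliffordAlgebra (mQF 𝔪 Q) := fun i => ι ⟨Z i, hZ𝔪 i⟩ with he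
  -- Clifford relation
  have hrel : ∀ i j, e i * e j
      = -(e j * e i) - ((2:ℝ) * (if i = j then 1 else 0)) • (1 : CliffordAlgebra (mQF 𝔪 Q)) := by
    intro i j
    have h := CliffordAlgebra.ι_mul_ι_add_swap (Q := mQF 𝔪 Q) ⟨Z i, hZ𝔪 i⟩ ⟨Z j, hZ𝔪 j⟩
    have hpolar : QuadraticMap.polar (mQF 𝔪 Q) ⟨Z i, hZ𝔪 i⟩ ⟨Z j, hZ𝔪 j⟩
        = -((2:ℝ) * (if i = j then 1 else 0)) := by
      show QuadraticMap.polar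
        (LinearMap.BilinMap.toQuadraticMap ((-Q).compl₁₂ 𝔪.subtype 𝔪.subtype)) _ _ = _
      rw [LinearMap.BilinMap.polar_toQuadraticMap]
      simp only [LinearMap.compl₁₂_apply, Submodule.coe_subtype, LinearMap.neg_apply]
      show -(Q (Z i) (Z j)) + -(Q (Z j) (Z i)) = _
      rw [hZon i j, hZon j i]
      by_cases hij : i = j
      · simp [hij]; norm_num
      · simp [hij, Ne.symm hij]
    rw [hpolar, Algebra.algebraMap_eq_smul_one] at h
    have := eq_sub_of_add_eq h
    rw [this, neg_smul]
    abel
  -- the coefficient tensor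
  set a : Fin n → Fin n → Fin n → Fin n → ℝ := fun j k l p =>
    Q (p𝔥 ⁅Z j, Z k⁆) (p𝔥 ⁅Z l, Z p⁆) with ha
  have h1 : ∀ j k l p, a j k l p = -a k j l p := by
    intro j k l p
    simp only [ha]
    rw [← lie_skew (Z j) (Z k), map_neg, map_neg]
    simp
  have h2 : ∀ j k l p, a j k l p = -a j k p l := by
    intro j k l p
    simp only [ha]
    rw [← lie_skew (Z l) (Z p), map_neg, map_neg]
  have h3 : ∀ j k l p, a j k l p = a l p j k := fun j k l p => hQsymm _ _
  -- Bianchi identity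
  have hkey : ∀ (i j : Fin n) (h : 𝔤), h ∈ 𝔥 →
      Q (Z i) ⁅Z j, h⁆ = Q (p𝔥 ⁅Z i, Z j⁆) h := by
    intro i j h hh
    have h0 := hQinv (Z j) (Z i) h
    have h0' : Q (Z i) ⁅Z j, h⁆ = Q ⁅Z i, Z j⁆ h := by
      rw [← lie_skew (Z i) (Z j), map_neg, LinearMap.neg_apply]
      linarith
    have hdecomp : (⁅Z i, Z j⁆ : 𝔤) = p𝔥 ⁅Z i, Z j⁆ + p𝔪 ⁅Z i, Z j⁆ := (hsum _).symm
    have hzero : Q (p𝔪 ⁅Z i, Z j⁆) h = 0 := by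
      rw [hQsymm]
      exact hQ𝔥𝔪 h hh _ (hmem𝔪 _)
    have hsplit : Q ⁅Z i, Z j⁆ h = Q (p𝔥 ⁅Z i, Z j⁆) h + Q (p𝔪 ⁅Z i, Z j⁆) h := by
      conv_lhs => rw [hdecomp]
      rw [map_add, LinearMap.add_apply]
    rw [h0', hsplit, hzero, add_zero]
  have hjac : ∀ j k l p, Q (Z j) (jacH p𝔥 (Z k) (Z l) (Z p))
      = a j k l p + a j l p k + a j p k l := by
    intro j k l p
    rw [jacH, map_add, map_add]
    rw [hkey j k _ (hmem𝔥 _), hkey j l _ (hmem𝔥 _), hkey j p _ (hmem𝔥 _)]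
  -- apply the core computation
  have core := casimir_core e hrel a h1 h2 h3
  refine core.trans ?_
  congr 1
  congr 1
  refine Finset.sum_congr rfl fun j _ => Finset.sum_congr rfl fun k _ =>
    Finset.sum_congr rfl fun l _ => Finset.sum_congr rfl fun p _ => ?_
  by_cases h : j < k ∧ k < l ∧ l < p
  · rw [if_pos h, if_pos h, hjac j k l p]
  · rw [if_neg h, if_neg h]
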